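/- Under the hypotheses of the previous gauge-transformation setup (M Hilbert-Schmidt, M₀₀ = 1, off-(0,0) Hilbert-Schmidt norm at most ε ≤ 1/4), the (0,0) entry of M̃ = exp(−B) M exp(B) satisfies |M̃₀₀ − 1| ≤ C ε² for an absolute constant C. -/

import Mathlib

set_option maxHeartbeats 2000000
set_option synthInstance.maxHeartbeats 1000000

open NormedSpace

/-- `V = ℓ²(ℕ, ℝ)`. -/
noncomputable abbrev V : Type := lp (fun _ : ℕ => ℝ) 2

/-- The standard orthonormal basis vector `e_i` of `V`. -/
noncomputable def e (i : ℕ) : V := lp.single 2 i (1 : ℝ)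

lemma inner_e (i : ℕ) (v : V) : (inner ℝ (e i) v : ℝ) = v i := by
  simp [e, lp.inner_single_left]

lemma e_apply (i j : ℕ) : (e i) j = if j = i then 1 else 0 := by
  simp [e, lp.single_apply, Pi.single_apply]

lemma norm_e : ‖e 0‖ = 1 := by
  have := lp.norm_single (p := 2) (E := fun _ : ℕ => ℝ) (by norm_num)
    0 (1:ℝ)
  simpa [e] using this

lemma norm_sq_eq (v : V) : ‖v‖ ^ 2 = ∑' i, (v i) ^ 2 := by
  have h := lp.norm_rpow_eq_tsum (p := 2) (by norm_num) v
  simp at h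
  rw [← Real.rpow_natCast, ← h]
  norm_num

lemma coord_summable (v : V) : Summable fun i => (v i) ^ 2 := by
  have h := (lp.memℓp v).summable (p := 2) (by norm_num)
  simp only [ENNReal.toReal_ofNat] at h
  have : (fun i => ‖v i‖ ^ (2:ℝ)) = fun i => (v i) ^ 2 := by
    funext i
    rw [show ((2:ℝ) = ((2:ℕ):ℝ)) by norm_num, Real.rpow_natCast]
    simp [sq_abs]
  rwa [this] at h

lemma rank1_apply (x y z : V) :
    ((innerSL ℝ x).smulRight y) z = (inner ℝ x z : ℝ) • y := rfl

lemma rank1_adjoint (x y : V) :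
    ContinuousLinearMap.adjoint ((innerSL ℝ x).smulRight y)
      = (innerSL ℝ y).smulRight x := by
  symm
  rw [ContinuousLinearMap.eq_adjoint_iff]
  intro u v
  simp [rank1_apply, inner_smul_left, inner_smul_right, real_inner_comm x v,
    real_inner_comm y u]
  ring

lemma rank1_norm_le (x y : V) : ‖(innerSL ℝ x).smulRight y‖ ≤ ‖x‖ * ‖y‖ := by
  apply ContinuousLinearMap.opNorm_le_bound _ (by positivity)
  intro z
  rw [rank1_apply, norm_smul]
  calc ‖(inner ℝ x z : ℝ)‖ * ‖y‖ ≤ (‖x‖ * ‖z‖) * ‖y‖ := by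
        gcongr; exact norm_inner_le_norm x z
    _ = ‖x‖ * ‖y‖ * ‖z‖ := by ring

lemma exp_remainder (A : V →L[ℝ] V) :
    ‖exp A - 1 - A‖ ≤ ‖A‖ ^ 2 * Real.exp ‖A‖ := by
  set f : ℕ → (V →L[ℝ] V) := fun n => ((Nat.factorial n : ℝ))⁻¹ • A ^ n with hf
  have hs : Summable f := expSeries_summable' (𝕂 := ℝ) A
  have h0 : exp A = ∑' n, f n := by rw [exp_eq_tsum ℝ]
  have hs1 : Summable fun n => f (n + 1) := (summable_nat_add_iff 1).2 hs
  have hs2 : Summable fun n => f (n + 2) := (summable_nat_add_iff 2).2 hs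
  have h1 : ∑' n, f n = f 0 + ∑' n, f (n + 1) := Summable.tsum_eq_zero_add hs
  have h2 : ∑' n, f (n + 1) = f 1 + ∑' n, f (n + 2) := by
    have := Summable.tsum_eq_zero_add hs1
    simpa using this
  have hf0 : f 0 = 1 := by simp [hf]
  have hf1 : f 1 = A := by simp [hf]
  have heq : exp A - 1 - A = ∑' n, f (n + 2) := by
    rw [h0, h1, h2, hf0, hf1]; abel
  rw [heq]
  have hbound : ∀ n, ‖f (n + 2)‖ ≤ ‖A‖ ^ 2 * (‖A‖ ^ n / (Nat.factorial n)) := by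
    intro n
    have h3 : ‖f (n + 2)‖ ≤ ((Nat.factorial (n+2)) : ℝ)⁻¹ * ‖A‖ ^ (n + 2) := by
      rw [hf]
      calc ‖(((Nat.factorial (n+2) : ℝ))⁻¹) • A ^ (n+2)‖
          = ((Nat.factorial (n+2) : ℝ))⁻¹ * ‖A ^ (n+2)‖ := by
            rw [norm_smul ((((n+2) : ℕ).factorial : ℝ))⁻¹ (A ^ (n+2))]
            simp
        _ ≤ ((Nat.factorial (n+2)) : ℝ)⁻¹ * ‖A‖ ^ (n + 2) := by
            gcongr
            exact norm_pow_le' A (Nat.succ_pos _)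
    refine h3.trans ?_
    have hfact : (Nat.factorial n : ℝ) ≤ ((Nat.factorial (n+2)) : ℝ) := by
      exact_mod_cast Nat.factorial_le (by omega)
    have : ((Nat.factorial (n+2)) : ℝ)⁻¹ ≤ ((Nat.factorial n : ℝ))⁻¹ := by
      apply inv_anti₀ (by positivity) hfact
    calc ((Nat.factorial (n+2)) : ℝ)⁻¹ * ‖A‖ ^ (n + 2)
        ≤ ((Nat.factorial n : ℝ))⁻¹ * ‖A‖ ^ (n + 2) := by gcongr
      _ = ‖A‖ ^ 2 * (‖A‖ ^ n / (Nat.factorial n)) := by ring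
  have hsum2 : Summable fun n => ‖A‖ ^ 2 * (‖A‖ ^ n / (Nat.factorial n)) :=
    (Real.summable_pow_div_factorial ‖A‖).mul_left _
  have hsn : Summable fun n => ‖f (n + 2)‖ :=
    (summable_nat_add_iff 2).2 (norm_expSeries_summable' (𝕂 := ℝ) A)
  calc ‖∑' n, f (n + 2)‖ ≤ ∑' n, ‖f (n + 2)‖ := norm_tsum_le_tsum_norm hsn
    _ ≤ ∑' n, ‖A‖ ^ 2 * (‖A‖ ^ n / (Nat.factorial n)) := Summable.tsum_le_tsum hbound hsn hsum2
    _ = ‖A‖ ^ 2 * ∑' n, ‖A‖ ^ n / (Nat.factorial n) := tsum_mul_left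
    _ = ‖A‖ ^ 2 * Real.exp ‖A‖ := by rw [Real.exp_eq_exp_ℝ, exp_eq_tsum_div]

/-- In the gauge-transformation setup (`M` Hilbert-Schmidt with `M₀₀ = 1`, off-`(0,0)`
Hilbert-Schmidt norm at most `ε ≤ 1/4`, `l_x = M_{x0}`, `r_x = M_{0x}`,
`B = |l⟩⟨e₀| − |e₀⟩⟨r|`), the `(0,0)` entry of `M̃ = exp(−B) M exp(B)` satisfies
`|M̃₀₀ − 1| ≤ C ε²` for an absolute constant `C`. -/
theorem stmt10 : ∃ C : ℝ, 0 < C ∧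
    ∀ (M : ℕ × ℕ → ℝ) (ε : ℝ) (Mop : V →L[ℝ] V) (l r : V),
      Summable (fun p : ℕ × ℕ => (M p) ^ 2) →
      M (0, 0) = 1 →
      Real.sqrt (∑' p : {p : ℕ × ℕ // p ≠ (0, 0)}, (M p.1) ^ 2) ≤ ε →
      ε ≤ 1 / 4 →
      (∀ i j : ℕ, (inner ℝ (e i) (Mop (e j)) : ℝ) = M (i, j)) →
      (∀ x : ℕ, l x = if x = 0 then 0 else M (x, 0)) →
      (∀ x : ℕ, r x = if x = 0 then 0 else M (0, x)) →
      ∀ B Mt : V →L[ℝ] V,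
        B = (innerSL ℝ (e 0)).smulRight l - (innerSL ℝ r).smulRight (e 0) →
        Mt = (exp (-B)).comp (Mop.comp (exp B)) →
        |(inner ℝ (e 0) (Mt (e 0)) : ℝ) - 1| ≤ C * ε ^ 2 := by
  refine ⟨100, by norm_num, ?_⟩
  intro M ε Mop l r hsum hM00 hε hε14 hent hl hr B Mt hB hMt
  -- basic positivity
  set S := ∑' p : {p : ℕ × ℕ // p ≠ (0, 0)}, (M p.1) ^ 2 with hSdef
  have hSsum : Summable fun p : {p : ℕ × ℕ // p ≠ (0, 0)} => (M p.1) ^ 2 :=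
    hsum.subtype _
  have hS0 : 0 ≤ S := tsum_nonneg (fun p => sq_nonneg _)
  have hε0 : 0 ≤ ε := le_trans (Real.sqrt_nonneg _) hε
  have hSle : S ≤ ε ^ 2 := by
    have := Real.sq_sqrt hS0
    nlinarith [Real.sqrt_nonneg S]
  -- generic norm bound via injection into the off-diagonal index set
  have key_norm : ∀ (v : V) (j : ℕ → {p : ℕ × ℕ // p ≠ (0, 0)}),
      Function.Injective j → (∀ x, (v x) ^ 2 ≤ (M (j x).1) ^ 2) → ‖v‖ ≤ ε := by
    intro v j hjinj hcoord
    have h2 : ∑' x, (v x) ^ 2 ≤ S :=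
      Summable.tsum_le_tsum_of_inj j hjinj (fun c _ => sq_nonneg _) hcoord
        (coord_summable v) hSsum
    have h3 : ‖v‖ ^ 2 ≤ ε ^ 2 := by rw [norm_sq_eq]; linarith
    nlinarith [norm_nonneg v]
  have hl0 : l 0 = 0 := by simp [hl 0]
  have hr0 : r 0 = 0 := by simp [hr 0]
  have hlε : ‖l‖ ≤ ε := by
    refine key_norm l (fun x => if hx : x = 0 then ⟨(0,1), by simp⟩
      else ⟨(x,0), by simp [hx]⟩) ?_ ?_
    · intro a b hab
      by_cases ha : a = 0 <;> by_cases hb : b = 0 <;>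
        simp [ha, hb, Subtype.ext_iff, Prod.ext_iff] at hab <;> omega
    · intro x
      by_cases hx : x = 0
      · simp [hx, hl0, sq_nonneg]
      · simp [hx, hl x]
  have hrε : ‖r‖ ≤ ε := by
    refine key_norm r (fun x => if hx : x = 0 then ⟨(1,0), by simp⟩
      else ⟨(0,x), by simp [hx]⟩) ?_ ?_
    · intro a b hab
      by_cases ha : a = 0 <;> by_cases hb : b = 0 <;>
        simp [ha, hb, Subtype.ext_iff, Prod.ext_iff] at hab <;> omega
    · intro x
      by_cases hx : x = 0
      · simp [hx, hr0, sq_nonneg]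
      · simp [hx, hr x]
  -- total Hilbert-Schmidt mass
  have htot : ∑' p : ℕ × ℕ, (M p) ^ 2 ≤ 4 := by
    have h1 : ∑' p : {p : ℕ × ℕ // p ≠ (0, 0)}, (M p.1) ^ 2
        = ∑' p : ℕ × ℕ, if p = (0,0) then 0 else (M p) ^ 2 := by
      have hts := tsum_subtype (f := fun p : ℕ × ℕ => (M p)^2)
        ({(0,0)}ᶜ : Set (ℕ × ℕ))
      rw [show (∑' p : {p : ℕ × ℕ // p ≠ (0, 0)}, (M p.1) ^ 2)
          = ∑' p : ({(0,0)}ᶜ : Set (ℕ × ℕ)), (M p.1)^2 from rfl, hts]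
      congr 1
      funext p
      by_cases hp : p = (0,0) <;> simp [Set.indicator, hp]
    have h2 : ∑' p : ℕ × ℕ, (M p) ^ 2 = 1 + S := by
      rw [Summable.tsum_eq_add_tsum_ite hsum (0,0), hM00, hSdef, h1]
      norm_num
    nlinarith
  -- operator norm bound
  have hMopw : ∀ w : V, ‖Mop w‖ ≤ 2 * ‖w‖ := by
    intro w
    set row : ℕ → V := fun i => ContinuousLinearMap.adjoint Mop (e i) with hrowdef
    have hrow : ∀ i j, (row i) j = M (i, j) := by
      intro i j
      rw [← inner_e j (row i), hrowdef]
      rw [ContinuousLinearMap.adjoint_inner_right]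
      rw [real_inner_comm, hent i j]
    have hrowsq : ∀ i, ‖row i‖ ^ 2 = ∑' j, (M (i, j)) ^ 2 := by
      intro i
      rw [norm_sq_eq]
      congr 1; funext j; rw [hrow]
    have hpair := (summable_prod_of_nonneg (fun p => sq_nonneg (M p))).1 hsum
    have hrowsum : Summable fun i => ‖row i‖ ^ 2 := by
      apply hpair.2.congr
      intro i
      rw [hrowsq]
    have hrowtot : ∑' i, ‖row i‖ ^ 2 ≤ 4 := by
      calc ∑' i, ‖row i‖ ^ 2 = ∑' i, ∑' j, (M (i,j)) ^ 2 := by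
            congr 1; funext i; exact hrowsq i
        _ = ∑' p : ℕ × ℕ, (M p) ^ 2 := (Summable.tsum_prod' hsum hpair.1).symm
        _ ≤ 4 := htot
    have hcoord : ∀ i, ((Mop w) i) ^ 2 ≤ ‖row i‖ ^ 2 * ‖w‖ ^ 2 := by
      intro i
      have h1 : (Mop w) i = inner ℝ (row i) w := by
        rw [hrowdef, ContinuousLinearMap.adjoint_inner_left, inner_e]
      rw [h1]
      calc (inner ℝ (row i) w : ℝ) ^ 2 = |(inner ℝ (row i) w : ℝ)| ^ 2 := (sq_abs _).symm
        _ ≤ (‖row i‖ * ‖w‖) ^ 2 :=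
            pow_le_pow_left₀ (abs_nonneg _) (abs_real_inner_le_norm _ _) 2
        _ = ‖row i‖ ^ 2 * ‖w‖ ^ 2 := by ring
    have h2 : ‖Mop w‖ ^ 2 ≤ 4 * ‖w‖ ^ 2 := by
      rw [norm_sq_eq]
      calc ∑' i, ((Mop w) i) ^ 2 ≤ ∑' i, ‖row i‖ ^ 2 * ‖w‖ ^ 2 :=
            Summable.tsum_le_tsum hcoord (coord_summable _) (hrowsum.mul_right _)
        _ = (∑' i, ‖row i‖ ^ 2) * ‖w‖ ^ 2 := tsum_mul_right
        _ ≤ 4 * ‖w‖ ^ 2 := by nlinarith [sq_nonneg ‖w‖]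
    nlinarith [norm_nonneg (Mop w), norm_nonneg w]
  -- basic inner products
  have hee : (inner ℝ (e 0) (e 0) : ℝ) = 1 := by rw [inner_e, e_apply]; simp
  have hel : (inner ℝ (e 0) l : ℝ) = 0 := by rw [inner_e, hl0]
  have her : (inner ℝ (e 0) r : ℝ) = 0 := by rw [inner_e, hr0]
  have hre : (inner ℝ r (e 0) : ℝ) = 0 := by rw [real_inner_comm, her]
  -- B applied to e 0, and star B
  have hBe0 : B (e 0) = l := by
    rw [hB]
    simp only [ContinuousLinearMap.sub_apply, rank1_apply, hee, hre]
    simp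
  have hstarB : star B
      = (innerSL ℝ l).smulRight (e 0) - (innerSL ℝ (e 0)).smulRight r := by
    rw [ContinuousLinearMap.star_eq_adjoint, hB, map_sub, rank1_adjoint, rank1_adjoint]
  have hle : (inner ℝ l (e 0) : ℝ) = 0 := by rw [real_inner_comm, hel]
  have hstarBe0 : (star B) (e 0) = -r := by
    rw [hstarB]
    simp only [ContinuousLinearMap.sub_apply, rank1_apply, hle, hee]
    simp
  -- norm of B
  have hnB : ‖B‖ ≤ 2 * ε := by
    rw [hB]
    calc ‖(innerSL ℝ (e 0)).smulRight l - (innerSL ℝ r).smulRight (e 0)‖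
        ≤ ‖(innerSL ℝ (e 0)).smulRight l‖ + ‖(innerSL ℝ r).smulRight (e 0)‖ :=
          norm_sub_le _ _
      _ ≤ ‖e 0‖ * ‖l‖ + ‖r‖ * ‖e 0‖ :=
          add_le_add (rank1_norm_le _ _) (rank1_norm_le _ _)
      _ ≤ 2 * ε := by rw [norm_e]; nlinarith
  -- exp remainder vectors
  set v : V := exp B (e 0) with hvdef
  set u : V := exp (-(star B)) (e 0) with hudef
  set ρ : V := v - e 0 - l with hρdef
  set ρ' : V := u - e 0 - r with hρ'def
  have hexpB : Real.exp ‖B‖ ≤ 3 := by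
    have h1 : ‖B‖ ≤ 1 := by nlinarith
    calc Real.exp ‖B‖ ≤ Real.exp 1 := Real.exp_le_exp.2 h1
      _ ≤ 3 := by nlinarith [Real.exp_one_lt_d9]
  have hρbound : ‖ρ‖ ≤ 12 * ε ^ 2 := by
    have h1 : ρ = (exp B - 1 - B) (e 0) := by
      simp only [ContinuousLinearMap.sub_apply, ContinuousLinearMap.one_apply, hBe0]
      rw [hρdef, hvdef]
    rw [h1]
    calc ‖(exp B - 1 - B) (e 0)‖ ≤ ‖exp B - 1 - B‖ * ‖e 0‖ :=
          ContinuousLinearMap.le_opNorm _ _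
      _ ≤ (‖B‖ ^ 2 * Real.exp ‖B‖) * 1 := by
          rw [norm_e]; gcongr; exact exp_remainder B
      _ ≤ 12 * ε ^ 2 := by nlinarith [norm_nonneg B, Real.exp_pos ‖B‖]
  have hρ'bound : ‖ρ'‖ ≤ 12 * ε ^ 2 := by
    have h1 : ρ' = (exp (-(star B)) - 1 - (-(star B))) (e 0) := by
      simp only [ContinuousLinearMap.sub_apply, ContinuousLinearMap.one_apply,
        ContinuousLinearMap.neg_apply, hstarBe0]
      rw [hρ'def, hudef]
      abel
    rw [h1]
    have hnBs : ‖-(star B)‖ = ‖B‖ := by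
      rw [norm_neg, ContinuousLinearMap.star_eq_adjoint]
      exact ContinuousLinearMap.adjoint.norm_map B
    calc ‖(exp (-(star B)) - 1 - (-(star B))) (e 0)‖
        ≤ ‖exp (-(star B)) - 1 - (-(star B))‖ * ‖e 0‖ :=
          ContinuousLinearMap.le_opNorm _ _
      _ ≤ (‖-(star B)‖ ^ 2 * Real.exp ‖-(star B)‖) * 1 := by
          rw [norm_e]; gcongr; exact exp_remainder _
      _ ≤ 12 * ε ^ 2 := by
          rw [hnBs]
          nlinarith [norm_nonneg B, Real.exp_pos ‖B‖]
  -- matrix action on e 0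
  have hMe0 : Mop (e 0) = e 0 + l := by
    apply lp.ext
    funext i
    have h1 : (Mop (e 0)) i = M (i, 0) := by rw [← inner_e, hent]
    have h2 : ((e 0 + l : V) : ∀ _ : ℕ, ℝ) i = (e 0) i + l i := by
      rw [lp.coeFn_add]; rfl
    rw [h1, h2, e_apply, hl i]
    by_cases hi : i = 0 <;> simp [hi, show M 0 = 1 from hM00, hM00]
  have hMadj : ContinuousLinearMap.adjoint Mop (e 0) = e 0 + r := by
    apply lp.ext
    funext i
    have h1 : (ContinuousLinearMap.adjoint Mop (e 0)) i = M (0, i) := by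
      rw [← inner_e, ContinuousLinearMap.adjoint_inner_right, real_inner_comm, hent]
    have h2 : ((e 0 + r : V) : ∀ _ : ℕ, ℝ) i = (e 0) i + r i := by
      rw [lp.coeFn_add]; rfl
    rw [h1, h2, e_apply, hr i]
    by_cases hi : i = 0 <;> simp [hi, show M 0 = 1 from hM00, hM00]
  -- reduce Mt entry to inner u (Mop v)
  have hkey : (inner ℝ (e 0) (Mt (e 0)) : ℝ) = inner ℝ u (Mop v) := by
    rw [hMt]
    simp only [ContinuousLinearMap.comp_apply]
    rw [← hvdef]
    have hadj : ContinuousLinearMap.adjoint (exp (-(star B))) = exp (-B) := by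
      rw [← ContinuousLinearMap.star_eq_adjoint, star_exp, star_neg, star_star]
    rw [← hadj, ContinuousLinearMap.adjoint_inner_right]
  -- decomposition
  have hu : u = e 0 + (r + ρ') := by rw [hρ'def]; abel
  have hv : v = e 0 + (l + ρ) := by rw [hρdef]; abel
  have hdecomp : (inner ℝ u (Mop v) : ℝ)
      = inner ℝ u ((e 0 + l : V)) + (inner ℝ ((e 0 + r : V)) ((l + ρ : V))
        + inner ℝ ((r + ρ' : V)) (Mop (l + ρ))) := by
    calc (inner ℝ u (Mop v) : ℝ)
        = inner ℝ u (Mop (e 0)) + inner ℝ u (Mop (l + ρ)) := by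
          rw [hv, map_add, inner_add_right]
      _ = inner ℝ u ((e 0 + l : V)) + (inner ℝ (e 0) (Mop (l + ρ))
            + inner ℝ ((r + ρ' : V)) (Mop (l + ρ))) := by
          rw [hMe0]
          congr 1
          rw [hu, inner_add_left]
      _ = inner ℝ u ((e 0 + l : V)) + (inner ℝ ((e 0 + r : V)) ((l + ρ : V))
            + inner ℝ ((r + ρ' : V)) (Mop (l + ρ))) := by
          rw [← hMadj, ContinuousLinearMap.adjoint_inner_left]
  have hexpand : (inner ℝ u (Mop v) : ℝ) - 1
      = (2 * inner ℝ r l + inner ℝ ρ' ((e 0 + l : V)) + inner ℝ (e 0) ρ + inner ℝ r ρ)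
        + inner ℝ ((r + ρ' : V)) (Mop (l + ρ)) := by
    rw [hdecomp, hu]
    simp only [inner_add_left, inner_add_right, hee, hel, her, hre]
    ring
  -- bounds on individual terms
  have hb1 : |(inner ℝ r l : ℝ)| ≤ ε * ε := by
    calc |(inner ℝ r l : ℝ)| ≤ ‖r‖ * ‖l‖ := abs_real_inner_le_norm _ _
      _ ≤ ε * ε := by nlinarith [norm_nonneg r, norm_nonneg l]
  have hnel : ‖(e 0 + l : V)‖ ≤ 1 + ε := by
    calc ‖(e 0 + l : V)‖ ≤ ‖e 0‖ + ‖l‖ := norm_add_le _ _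
      _ ≤ 1 + ε := by rw [norm_e]; linarith
  have hb2 : |(inner ℝ ρ' ((e 0 + l : V)) : ℝ)| ≤ (12 * ε ^ 2) * (1 + ε) := by
    calc |(inner ℝ ρ' ((e 0 + l : V)) : ℝ)| ≤ ‖ρ'‖ * ‖(e 0 + l : V)‖ :=
          abs_real_inner_le_norm _ _
      _ ≤ (12 * ε ^ 2) * (1 + ε) :=
          mul_le_mul hρ'bound hnel (norm_nonneg _) (by positivity)
  have hb3 : |(inner ℝ (e 0) ρ : ℝ)| ≤ 12 * ε ^ 2 := by
    calc |(inner ℝ (e 0) ρ : ℝ)| ≤ ‖e 0‖ * ‖ρ‖ := abs_real_inner_le_norm _ _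
      _ ≤ 12 * ε ^ 2 := by rw [norm_e]; linarith
  have hb4 : |(inner ℝ r ρ : ℝ)| ≤ ε * (12 * ε ^ 2) := by
    calc |(inner ℝ r ρ : ℝ)| ≤ ‖r‖ * ‖ρ‖ := abs_real_inner_le_norm _ _
      _ ≤ ε * (12 * ε ^ 2) := mul_le_mul hrε hρbound (norm_nonneg _) hε0
  have hnlρ : ‖(l + ρ : V)‖ ≤ ε + 12 * ε ^ 2 := by
    calc ‖(l + ρ : V)‖ ≤ ‖l‖ + ‖ρ‖ := norm_add_le _ _
      _ ≤ ε + 12 * ε ^ 2 := by linarith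
  have hnrρ' : ‖(r + ρ' : V)‖ ≤ ε + 12 * ε ^ 2 := by
    calc ‖(r + ρ' : V)‖ ≤ ‖r‖ + ‖ρ'‖ := norm_add_le _ _
      _ ≤ ε + 12 * ε ^ 2 := by linarith
  have hb5 : |(inner ℝ ((r + ρ' : V)) (Mop (l + ρ)) : ℝ)|
      ≤ (ε + 12 * ε ^ 2) * (2 * (ε + 12 * ε ^ 2)) := by
    calc |(inner ℝ ((r + ρ' : V)) (Mop (l + ρ)) : ℝ)|
        ≤ ‖(r + ρ' : V)‖ * ‖Mop (l + ρ)‖ := abs_real_inner_le_norm _ _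
      _ ≤ (ε + 12 * ε ^ 2) * (2 * (ε + 12 * ε ^ 2)) := by
          apply mul_le_mul hnrρ' ((hMopw _).trans (by nlinarith)) (norm_nonneg _)
            (by positivity)
  -- final assembly
  rw [hkey, show (inner ℝ u (Mop v) : ℝ) - 1
      = (2 * inner ℝ r l + inner ℝ ρ' ((e 0 + l : V)) + inner ℝ (e 0) ρ + inner ℝ r ρ)
        + inner ℝ ((r + ρ' : V)) (Mop (l + ρ)) from hexpand]
  have htri : |(2 * (inner ℝ r l : ℝ) + inner ℝ ρ' ((e 0 + l : V)) + inner ℝ (e 0) ρ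
        + inner ℝ r ρ) + inner ℝ ((r + ρ' : V)) (Mop (l + ρ))|
      ≤ 2 * |(inner ℝ r l : ℝ)| + |(inner ℝ ρ' ((e 0 + l : V)) : ℝ)|
        + |(inner ℝ (e 0) ρ : ℝ)| + |(inner ℝ r ρ : ℝ)|
        + |(inner ℝ ((r + ρ' : V)) (Mop (l + ρ)) : ℝ)| := by
    have h1 := abs_add_le (2 * (inner ℝ r l : ℝ) + inner ℝ ρ' ((e 0 + l : V)) + inner ℝ (e 0) ρ
      + inner ℝ r ρ) (inner ℝ ((r + ρ' : V)) (Mop (l + ρ)))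
    have h2 := abs_add_le (2 * (inner ℝ r l : ℝ) + inner ℝ ρ' ((e 0 + l : V)) + inner ℝ (e 0) ρ)
      ((inner ℝ r ρ : ℝ))
    have h3 := abs_add_le (2 * (inner ℝ r l : ℝ) + inner ℝ ρ' ((e 0 + l : V)))
      ((inner ℝ (e 0) ρ : ℝ))
    have h4 := abs_add_le (2 * (inner ℝ r l : ℝ)) ((inner ℝ ρ' ((e 0 + l : V)) : ℝ))
    have h5 : |2 * (inner ℝ r l : ℝ)| = 2 * |(inner ℝ r l : ℝ)| := by
      rw [abs_mul]; norm_num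
    linarith
  refine htri.trans ?_
  nlinarith [hb1, hb2, hb3, hb4, hb5,
    mul_nonneg (mul_nonneg hε0 hε0) (sub_nonneg.2 hε14),
    mul_nonneg (mul_nonneg (mul_nonneg hε0 hε0) hε0) (sub_nonneg.2 hε14)]
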